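/- Let (A, τ) be a unital commutative ℝ-algebra endowed with a locally multiplicatively convex topology τ and L : A → ℝ a τ-continuous linear functional. Then the following are equivalent: (1) L(Σ A²) ⊆ [0, +∞); (2) for all d ∈ ℕ, L(Σ A^{2d}) ⊆ [0, +∞); (3) there exists d ∈ ℕ with L(Σ A^{2d}) ⊆ [0, +∞). -/

import Mathlib

/-- The locally convex topology on `A` generated by a family of seminorms. -/
noncomputable def seminormFamilyTopology {A : Type*} [CommRing A] [Algebra ℝ A]
    {ι : Type*} [Nonempty ι] (p : ι → Seminorm ℝ A) : TopologicalSpace A :=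
  (SeminormFamily.moduleFilterBasis (p : SeminormFamily ℝ A ι)).topology

/-- `Σ A^{2d}`: the set of all finite sums of `2d`-th powers of elements of `A`. -/
def sumPowers (A : Type*) [CommRing A] (d : ℕ) : Set A :=
  (AddSubmonoid.closure (Set.range fun a : A => a ^ (2 * d)) : AddSubmonoid A)


set_option linter.unusedSectionVars false
set_option linter.unusedVariables false

namespace SPaux


variable {A : Type*} [CommRing A] [Algebra ℝ A]

lemma zero_mem (d : ℕ) : (0 : A) ∈ sumPowers A d := AddSubmonoid.zero_mem _

lemma add_mem {d : ℕ} {x y : A} (hx : x ∈ sumPowers A d) (hy : y ∈ sumPowers A d) :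
    x + y ∈ sumPowers A d := AddSubmonoid.add_mem _ hx hy

lemma pow_mem (d : ℕ) (z : A) : z ^ (2 * d) ∈ sumPowers A d :=
  AddSubmonoid.subset_closure ⟨z, rfl⟩

lemma mul_mem {d : ℕ} {x y : A} (hx : x ∈ sumPowers A d) (hy : y ∈ sumPowers A d) :
    x * y ∈ sumPowers A d := by
  induction hx using AddSubmonoid.closure_induction with
  | mem z hz =>
    obtain ⟨a, rfl⟩ := hz
    induction hy using AddSubmonoid.closure_induction with
    | mem w hw =>
      obtain ⟨b, rfl⟩ := hw
      rw [← mul_pow]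
      exact pow_mem d (a * b)
    | zero => simpa using zero_mem d
    | add u v _ _ hu hv => rw [mul_add]; exact add_mem hu hv
  | zero => simpa using zero_mem d
  | add u v _ _ hu hv => rw [add_mul]; exact add_mem hu hv

lemma smul_mem {d : ℕ} (hd : 0 < d) {l : ℝ} (hl : 0 ≤ l) {x : A} (hx : x ∈ sumPowers A d) :
    l • x ∈ sumPowers A d := by
  induction hx using AddSubmonoid.closure_induction with
  | mem z hz =>
    obtain ⟨a, rfl⟩ := hz
    have h2d : ((2 * d : ℕ) : ℝ) ≠ 0 := by positivity
    have key : (l ^ (((2 * d : ℕ) : ℝ))⁻¹) ^ (2 * d) = l := by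
      rw [← Real.rpow_natCast (l ^ (((2 * d : ℕ) : ℝ))⁻¹) (2 * d), ← Real.rpow_mul hl,
        inv_mul_cancel₀ h2d, Real.rpow_one]
    have : l • a ^ (2 * d) = ((l ^ (((2 * d : ℕ) : ℝ))⁻¹) • a) ^ (2 * d) := by
      rw [smul_pow, key]
    rw [this]
    exact pow_mem d _
  | zero => simpa using zero_mem d
  | add u v _ _ hu hv => rw [smul_add]; exact add_mem hu hv

lemma one_mem {d : ℕ} (hd : 0 < d) : (1 : A) ∈ sumPowers A d := by
  simpa using pow_mem d (1 : A)

lemma const_mem {d : ℕ} (hd : 0 < d) {l : ℝ} (hl : 0 ≤ l) : l • (1 : A) ∈ sumPowers A d :=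
  smul_mem hd hl (one_mem hd)

lemma subset_one {d : ℕ} : sumPowers A d ⊆ sumPowers A 1 := by
  intro x hx
  refine AddSubmonoid.closure_le.mpr ?_ hx
  rintro _ ⟨a, rfl⟩
  show a ^ (2*d) ∈ (AddSubmonoid.closure (Set.range fun a : A => a ^ (2 * 1)) : AddSubmonoid A)
  have : a ^ (2 * d) = (a ^ d) ^ (2 * 1) := by
    rw [← pow_mul, mul_one, mul_comm]
  rw [this]
  exact pow_mem 1 (a ^ d)


variable (σ : A → ℝ)

/-- The set of elements approximable by sums of `2d`-th powers in the seminorm `σ`. -/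
def Approx (d : ℕ) : Set A :=
  {x | ∀ ε : ℝ, 0 < ε → ∃ q ∈ sumPowers A d, σ (x - q) ≤ ε}

variable (h0 : ∀ x : A, 0 ≤ σ x)
  (hadd : ∀ x y : A, σ (x + y) ≤ σ x + σ y)
  (hsmul : ∀ (r : ℝ) (x : A), σ (r • x) ≤ |r| * σ x)
  (hmul : ∀ x y : A, σ (x * y) ≤ σ x * σ y)

include h0 hadd hsmul

lemma sigma_zero : σ (0 : A) ≤ 0 := by
  have := hsmul 0 (0 : A)
  simpa using this

lemma sigma_neg (x : A) : σ (-x) ≤ σ x := by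
  have := hsmul (-1) x
  simpa using this

lemma sigma_sum {ι : Type*} (s : Finset ι) (f : ι → A) :
    σ (∑ i ∈ s, f i) ≤ ∑ i ∈ s, σ (f i) := by
  classical
  induction s using Finset.cons_induction with
  | empty => simpa using sigma_zero σ h0 hadd hsmul
  | cons i s hi ih =>
    rw [Finset.sum_cons, Finset.sum_cons]
    exact (hadd _ _).trans (by linarith)

lemma approx_of_mem {d : ℕ} {q : A} (hq : q ∈ sumPowers A d) : q ∈ Approx σ d := by
  intro ε hε
  exact ⟨q, hq, by simpa using (sigma_zero σ h0 hadd hsmul).trans hε.le⟩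

lemma approx_add {d : ℕ} {x y : A} (hx : x ∈ Approx σ d) (hy : y ∈ Approx σ d) :
    x + y ∈ Approx σ d := by
  intro ε hε
  obtain ⟨q, hq, hq'⟩ := hx (ε / 2) (by positivity)
  obtain ⟨r, hr, hr'⟩ := hy (ε / 2) (by positivity)
  refine ⟨q + r, add_mem hq hr, ?_⟩
  have : x + y - (q + r) = (x - q) + (y - r) := by ring
  rw [this]
  calc σ ((x - q) + (y - r)) ≤ σ (x - q) + σ (y - r) := hadd _ _
  _ ≤ ε := by linarith

lemma approx_smul {d : ℕ} (hd : 0 < d) {l : ℝ} (hl : 0 ≤ l) {x : A} (hx : x ∈ Approx σ d) :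
    l • x ∈ Approx σ d := by
  intro ε hε
  obtain ⟨q, hq, hq'⟩ := hx (ε / (l + 1)) (by positivity)
  refine ⟨l • q, smul_mem hd hl hq, ?_⟩
  rw [← smul_sub]
  calc σ (l • (x - q)) ≤ |l| * σ (x - q) := hsmul _ _
  _ = l * σ (x - q) := by rw [abs_of_nonneg hl]
  _ ≤ l * (ε / (l + 1)) := by
        have := h0 (x - q)
        exact mul_le_mul_of_nonneg_left hq' hl
  _ ≤ ε := by
        rw [mul_div_assoc']
        rw [div_le_iff₀ (by positivity)]
        nlinarith

include hmul in
lemma approx_mul {d : ℕ} {x y : A} (hx : x ∈ Approx σ d) (hy : y ∈ Approx σ d) :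
    x * y ∈ Approx σ d := by
  intro ε hε
  set δ : ℝ := min 1 (ε / (σ x + σ y + 2)) with hδdef
  have hσx := h0 x; have hσy := h0 y
  have hδpos : 0 < δ := lt_min one_pos (by positivity)
  have hδ1 : δ ≤ 1 := min_le_left _ _
  have hδ2 : δ ≤ ε / (σ x + σ y + 2) := min_le_right _ _
  obtain ⟨q, hq, hq'⟩ := hx δ hδpos
  obtain ⟨r, hr, hr'⟩ := hy δ hδpos
  refine ⟨q * r, mul_mem hq hr, ?_⟩
  have key : x * y - q * r = (x - q) * y + q * (y - r) := by ring
  rw [key]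
  have hq'' : σ q ≤ σ x + 1 := by
    have h1 : σ q ≤ σ x + σ (-(x - q)) := by
      have h := hadd x (-(x - q))
      have e : x + -(x - q) = q := by ring
      rwa [e] at h
    have h2 : σ (-(x - q)) ≤ σ (x - q) := sigma_neg σ h0 hadd hsmul _
    linarith
  have e1 : σ ((x - q) * y) ≤ δ * σ y :=
    (hmul _ _).trans (mul_le_mul_of_nonneg_right hq' (h0 y))
  have e2 : σ (q * (y - r)) ≤ (σ x + 1) * δ := by
    refine (hmul _ _).trans ?_
    have := h0 (y - r)
    nlinarith
  have : δ * (σ x + σ y + 2) ≤ ε := by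
    calc δ * (σ x + σ y + 2) ≤ (ε / (σ x + σ y + 2)) * (σ x + σ y + 2) :=
          mul_le_mul_of_nonneg_right hδ2 (by positivity)
    _ = ε := div_mul_cancel₀ _ (by positivity)
  calc σ ((x - q) * y + q * (y - r)) ≤ σ ((x - q) * y) + σ (q * (y - r)) := hadd _ _
  _ ≤ δ * σ y + (σ x + 1) * δ := by linarith
  _ ≤ ε := by nlinarith

omit hmul in
lemma approx_nonneg (L : A →ₗ[ℝ] ℝ) (hLσ : ∀ x : A, |L x| ≤ σ x) {d : ℕ}
    (hpos : ∀ q ∈ sumPowers A d, 0 ≤ L q) {x : A} (hx : x ∈ Approx σ d) : 0 ≤ L x := by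
  refine le_of_forall_pos_le_add fun ε hε => ?_
  obtain ⟨q, hq, hq'⟩ := hx ε hε
  have h1 : |L (x - q)| ≤ ε := (hLσ _).trans hq'
  have h2 : L (x - q) = L x - L q := by rw [map_sub]
  have h3 := hpos q hq
  have := abs_le.mp h1
  linarith [this.1]


end SPaux

-- Newton iteration estimates
namespace SPaux

variable {A : Type*} [CommRing A] [Algebra ℝ A]
variable (σ : A → ℝ)

/-- Newton iteration for the `K`-th root of `1 + b`. -/
noncomputable def newton (K : ℕ) (b : A) : ℕ → A
  | 0 => 1
  | m + 1 => newton K b m + ((K : ℝ))⁻¹ • ((1 + b) - (newton K b m) ^ K)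

variable (h0 : ∀ x : A, 0 ≤ σ x)
  (hadd : ∀ x y : A, σ (x + y) ≤ σ x + σ y)
  (hsmul : ∀ (r : ℝ) (x : A), σ (r • x) ≤ |r| * σ x)
  (hmul : ∀ x y : A, σ (x * y) ≤ σ x * σ y)

include h0 hadd hsmul hmul

lemma s_one_add_pow_mul (u z : A) (m : ℕ) : σ ((1 + u) ^ m * z) ≤ (1 + σ u) ^ m * σ z := by
  induction m generalizing z with
  | zero => simp
  | succ m ih =>
    have key : (1 + u) ^ (m + 1) * z = (1 + u) ^ m * z + (1 + u) ^ m * (u * z) := by ring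
    rw [key]
    have h1 := ih z
    have h2 := ih (u * z)
    have h3 : σ (u * z) ≤ σ u * σ z := hmul u z
    have h4 : (0:ℝ) ≤ (1 + σ u) ^ m := pow_nonneg (by linarith [h0 u]) m
    calc σ ((1 + u) ^ m * z + (1 + u) ^ m * (u * z))
        ≤ σ ((1 + u) ^ m * z) + σ ((1 + u) ^ m * (u * z)) := hadd _ _
      _ ≤ (1 + σ u) ^ m * σ z + (1 + σ u) ^ m * (σ u * σ z) := by
          have := mul_le_mul_of_nonneg_left h3 h4
          linarith [h2.trans this]
      _ = (1 + σ u) ^ (m + 1) * σ z := by ring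

lemma s_one_add_pow_sub_one (u : A) (m : ℕ) : σ ((1 + u) ^ m - 1) ≤ (1 + σ u) ^ m - 1 := by
  induction m with
  | zero => simpa using sigma_zero σ h0 hadd hsmul
  | succ m ih =>
    have key : (1 + u) ^ (m + 1) - 1 = ((1 + u) ^ m - 1) + (1 + u) ^ m * u := by ring
    rw [key]
    have h2 := s_one_add_pow_mul σ h0 hadd hsmul hmul u u m
    calc σ (((1 + u) ^ m - 1) + (1 + u) ^ m * u)
        ≤ σ ((1 + u) ^ m - 1) + σ ((1 + u) ^ m * u) := hadd _ _
      _ ≤ ((1 + σ u) ^ m - 1) + (1 + σ u) ^ m * σ u := by linarith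
      _ = (1 + σ u) ^ (m + 1) - 1 := by ring

lemma s_one_sub_prod (w u : A) (i j : ℕ) :
    σ (1 - (1 + w) ^ i * (1 + u) ^ j) ≤ (1 + σ w) ^ i * (1 + σ u) ^ j - 1 := by
  have hneg : σ (1 - (1 + w) ^ i * (1 + u) ^ j) ≤ σ ((1 + w) ^ i * (1 + u) ^ j - 1) := by
    have h := sigma_neg σ h0 hadd hsmul ((1 + w) ^ i * (1 + u) ^ j - 1)
    have e : -((1 + w) ^ i * (1 + u) ^ j - 1) = 1 - (1 + w) ^ i * (1 + u) ^ j := by ring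
    rwa [e] at h
  refine hneg.trans ?_
  have key : (1 + w) ^ i * (1 + u) ^ j - 1
      = (1 + w) ^ i * ((1 + u) ^ j - 1) + ((1 + w) ^ i - 1) := by ring
  rw [key]
  have h1 := s_one_add_pow_mul σ h0 hadd hsmul hmul w ((1 + u) ^ j - 1) i
  have h2 := s_one_add_pow_sub_one σ h0 hadd hsmul hmul w i
  have h3 := s_one_add_pow_sub_one σ h0 hadd hsmul hmul u j
  have h4 : (0:ℝ) ≤ (1 + σ w) ^ i := pow_nonneg (by linarith [h0 w]) i
  calc σ ((1 + w) ^ i * ((1 + u) ^ j - 1) + ((1 + w) ^ i - 1))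
      ≤ σ ((1 + w) ^ i * ((1 + u) ^ j - 1)) + σ ((1 + w) ^ i - 1) := hadd _ _
    _ ≤ (1 + σ w) ^ i * σ ((1 + u) ^ j - 1) + ((1 + σ w) ^ i - 1) := by linarith
    _ ≤ (1 + σ w) ^ i * ((1 + σ u) ^ j - 1) + ((1 + σ w) ^ i - 1) := by
        nlinarith [h0 ((1 + u) ^ j - 1)]
    _ = (1 + σ w) ^ i * (1 + σ u) ^ j - 1 := by ring

omit h0 hadd hsmul hmul in
lemma pow_le_one_add {t : ℝ} (ht0 : 0 ≤ t) (ht1 : t ≤ 1) (m : ℕ) :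
    (1 + t) ^ m ≤ 1 + (2 ^ m - 1) * t := by
  induction m with
  | zero => norm_num
  | succ m ih =>
    have h2 : (1:ℝ) ≤ 2 ^ m := one_le_pow₀ (by norm_num)
    calc (1 + t) ^ (m + 1) = (1 + t) ^ m * (1 + t) := by ring
      _ ≤ (1 + (2 ^ m - 1) * t) * (1 + t) := by nlinarith
      _ = 1 + (2 ^ (m + 1) - 1) * t + (2 ^ m - 1) * t * (t - 1) := by ring
      _ ≤ 1 + (2 ^ (m + 1) - 1) * t := by
          have h3 : (0:ℝ) ≤ (2 ^ m - 1) * t := mul_nonneg (by linarith) ht0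
          have h4 : (2 ^ m - 1) * t * (t - 1) ≤ 0 :=
            mul_nonpos_of_nonneg_of_nonpos h3 (by linarith)
          linarith

set_option maxHeartbeats 1000000 in
/-- The key inductive estimate for the Newton iteration. -/
lemma newton_est (d : ℕ) (hd : 0 < d) (b : A)
    (hb : σ b ≤ ((8:ℝ) * 2 ^ (2 * d))⁻¹) (m : ℕ) :
    σ ((1 + b) - (newton (2 * d) b m) ^ (2 * d))
        ≤ ((8:ℝ) * 2 ^ (2 * d))⁻¹ * (1 / 2) ^ m ∧
      σ (newton (2 * d) b m - 1)
        ≤ 2 * ((8:ℝ) * 2 ^ (2 * d))⁻¹ * (1 - (1 / 2) ^ m) := by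
  set K := 2 * d with hK
  set η : ℝ := ((8:ℝ) * 2 ^ K)⁻¹ with hη
  have hηpos : 0 < η := by positivity
  have hη1 : η ≤ 1 / 8 := by
    rw [hη, inv_le_comm₀ (by positivity) (by norm_num)]
    have : (1:ℝ) ≤ 2 ^ K := one_le_pow₀ (by norm_num)
    nlinarith
  have hK2 : 2 ≤ K := by omega
  have hKpos : (0:ℝ) < (K:ℝ) := by positivity
  have hKhalf : ((K:ℝ))⁻¹ ≤ 1 / 2 := by
    rw [inv_le_comm₀ hKpos (by norm_num)]
    norm_num
    exact_mod_cast hK2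
  induction m with
  | zero =>
    constructor
    · simpa [newton] using hb
    · simpa [newton] using sigma_zero σ h0 hadd hsmul
  | succ m ih =>
    obtain ⟨ihe, ihu⟩ := ih
    set y : A := newton K b m with hy
    set e : A := (1 + b) - y ^ K with he
    set h : A := ((K : ℝ))⁻¹ • e with hh
    have hσh : σ h ≤ ((K:ℝ))⁻¹ * σ e := by
      have := hsmul ((K:ℝ))⁻¹ e
      rwa [abs_of_nonneg (inv_nonneg.mpr (Nat.cast_nonneg K))] at this
    have hσh' : σ h ≤ (1/2) * σ e := by nlinarith [h0 e]
    have hunf : newton K b (m + 1) = y + h := by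
      rw [hh, he, hy]
      simp [newton]
    set S : A := ∑ i ∈ Finset.range K, (y + h) ^ i * y ^ (K - 1 - i) with hS
    have hKe : (K:ℝ) • e = (((K:ℕ)) : A) * e := by
      rw [Nat.cast_smul_eq_nsmul ℝ K e, nsmul_eq_mul]
    have hid : (1 + b) - (y + h) ^ K = ((K:ℝ))⁻¹ • (((((K:ℕ)) : A) - S) * e) := by
      have hgeom : S * ((y + h) - y) = (y + h) ^ K - y ^ K := geom_sum₂_mul (y + h) y K
      have h1 : (y + h) - y = h := by ring
      rw [h1] at hgeom
      have h2 : (1 + b) - (y + h) ^ K = e - S * h := by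
        rw [he]; linear_combination hgeom
      rw [h2, hh, mul_smul_comm, sub_mul, smul_sub]
      congr 1
      rw [← hKe, smul_smul, inv_mul_cancel₀ (ne_of_gt hKpos), one_smul]
    -- estimate σ((K:A) - S)
    set u : A := y - 1 with hu
    have hyu : y = 1 + u := by rw [hu]; ring
    set t : ℝ := σ u + σ h with ht
    have htnn : 0 ≤ t := by have := h0 u; have := h0 h; linarith
    have hm0 : (0:ℝ) < (1/2:ℝ) ^ m := by positivity
    have hm1 : (1/2:ℝ) ^ m ≤ 1 := pow_le_one₀ (by norm_num) (by norm_num)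
    have hσu : σ u ≤ 2 * η * (1 - (1/2) ^ m) := ihu
    have hσe : σ e ≤ η * (1/2) ^ m := ihe
    have ht2η : t ≤ 2 * η := by
      have h1 : σ h ≤ (1/2) * (η * (1/2) ^ m) := by nlinarith [h0 e]
      rw [ht]; nlinarith
    have ht1 : t ≤ 1 := by linarith
    have hterm : ∀ i ∈ Finset.range K,
        σ (1 - (y + h) ^ i * y ^ (K - 1 - i)) ≤ 2 ^ K * t := by
      intro i hi
      have hiK : i < K := Finset.mem_range.mp hi
      have hyh : y + h = 1 + (u + h) := by rw [hyu]; ring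
      rw [hyh, hyu]
      have hwb : σ (u + h) ≤ t := by rw [ht]; exact hadd u h
      have h1 := s_one_sub_prod σ h0 hadd hsmul hmul (u + h) u i (K - 1 - i)
      refine h1.trans ?_
      have h4 : (1 + σ (u + h)) ^ i * (1 + σ u) ^ (K - 1 - i) ≤ (1 + t) ^ (K - 1) := by
        have e1 : (1 + t) ^ i * (1 + t) ^ (K - 1 - i) = (1 + t) ^ (K - 1) := by
          rw [← pow_add]
          congr 1
          omega
        have h2 : (1 + σ (u + h)) ^ i ≤ (1 + t) ^ i :=
          pow_le_pow_left₀ (by linarith [h0 (u + h)]) (by linarith) i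
        have h3 : (1 + σ u) ^ (K - 1 - i) ≤ (1 + t) ^ (K - 1 - i) :=
          pow_le_pow_left₀ (by linarith [h0 u]) (by rw [ht]; linarith [h0 h]) _
        have p1 : (0:ℝ) ≤ (1 + σ (u + h)) ^ i := pow_nonneg (by linarith [h0 (u + h)]) i
        have p2 : (0:ℝ) ≤ (1 + σ u) ^ (K - 1 - i) := pow_nonneg (by linarith [h0 u]) _
        have p3 : (0:ℝ) ≤ (1 + t) ^ i := pow_nonneg (by linarith) i
        nlinarith
      have h5 : (1 + t) ^ (K - 1) ≤ 1 + (2 ^ (K - 1) - 1) * t :=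
        pow_le_one_add htnn ht1 _
      have h6 : (2:ℝ) ^ (K - 1) ≤ 2 ^ K := pow_le_pow_right₀ (by norm_num) (by omega)
      nlinarith
    have hKS : σ ((((K:ℕ)) : A) - S) ≤ (K:ℝ) * (2 ^ K * t) := by
      have hKsum : ((((K:ℕ)) : A)) - S
          = ∑ i ∈ Finset.range K, ((1:A) - (y + h) ^ i * y ^ (K - 1 - i)) := by
        rw [Finset.sum_sub_distrib, hS]
        congr 1
        simp
      rw [hKsum]
      refine (sigma_sum σ h0 hadd hsmul _ _).trans ?_
      calc ∑ i ∈ Finset.range K, σ ((1:A) - (y + h) ^ i * y ^ (K - 1 - i))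
          ≤ ∑ _i ∈ Finset.range K, (2:ℝ) ^ K * t := Finset.sum_le_sum hterm
        _ = (K:ℝ) * (2 ^ K * t) := by
            rw [Finset.sum_const, Finset.card_range, nsmul_eq_mul]
    -- conclude
    have hσe' : σ ((1 + b) - (y + h) ^ K) ≤ η * (1/2) ^ (m + 1) := by
      rw [hid]
      have b1 : σ (((K:ℝ))⁻¹ • (((((K:ℕ)) : A) - S) * e))
          ≤ ((K:ℝ))⁻¹ * (σ ((((K:ℕ)) : A) - S) * σ e) := by
        refine (hsmul _ _).trans ?_
        rw [abs_of_nonneg (inv_nonneg.mpr (Nat.cast_nonneg K))]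
        have hmm := hmul ((((K:ℕ)) : A) - S) e
        have hKi : (0:ℝ) ≤ ((K:ℝ))⁻¹ := inv_nonneg.mpr (Nat.cast_nonneg K)
        nlinarith
      refine b1.trans ?_
      have c1 : ((K:ℝ))⁻¹ * (σ ((((K:ℕ)) : A) - S) * σ e)
          ≤ ((K:ℝ))⁻¹ * ((K:ℝ) * (2 ^ K * t) * σ e) := by
        have hKi : (0:ℝ) ≤ ((K:ℝ))⁻¹ := inv_nonneg.mpr (Nat.cast_nonneg K)
        exact mul_le_mul_of_nonneg_left (mul_le_mul_of_nonneg_right hKS (h0 e)) hKi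
      refine c1.trans ?_
      have c2 : ((K:ℝ))⁻¹ * ((K:ℝ) * (2 ^ K * t) * σ e) = 2 ^ K * t * σ e := by
        field_simp
      rw [c2]
      have hKη : (2:ℝ) ^ K * (2 * η) ≤ 1 / 4 := by
        rw [hη]
        have hp : (0:ℝ) < 2 ^ K := by positivity
        rw [show (2:ℝ) ^ K * (2 * (8 * 2 ^ K)⁻¹) = 1 / 4 by field_simp; ring]
      calc (2:ℝ) ^ K * t * σ e = 2 ^ K * (t * σ e) := by ring
        _ ≤ 2 ^ K * ((2 * η) * (η * (1/2) ^ m)) := by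
            have q1 : t * σ e ≤ (2 * η) * (η * (1/2) ^ m) :=
              mul_le_mul ht2η hσe (h0 e) (by positivity)
            exact mul_le_mul_of_nonneg_left q1 (by positivity)
        _ = 2 ^ K * (2 * η) * (η * (1/2) ^ m) := by ring
        _ ≤ (1/4) * (η * (1/2) ^ m) := mul_le_mul_of_nonneg_right hKη (by positivity)
        _ ≤ η * (1/2) ^ (m + 1) := by
            rw [pow_succ]
            nlinarith [mul_pos hηpos hm0]
    have hσu' : σ (y + h - 1) ≤ 2 * η * (1 - (1/2) ^ (m + 1)) := by
      have e1 : y + h - 1 = u + h := by rw [hu]; ring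
      rw [e1]
      have := hadd u h
      have h1 : σ h ≤ (1/2) * (η * (1/2) ^ m) := by nlinarith [h0 e]
      have e2 : 2 * η * (1 - (1/2) ^ (m + 1)) = 2 * η - η * (1/2) ^ m := by
        rw [pow_succ]; ring
      rw [e2]
      linarith
    rw [hunf]
    exact ⟨hσe', hσu'⟩

end SPaux

-- Bernstein identity and the core positivity theorem
namespace SPaux

variable {A : Type*} [CommRing A] [Algebra ℝ A]
variable (σ : A → ℝ)
  (h0 : ∀ x : A, 0 ≤ σ x)
  (hadd : ∀ x y : A, σ (x + y) ≤ σ x + σ y)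
  (hsmul : ∀ (r : ℝ) (x : A), σ (r • x) ≤ |r| * σ x)
  (hmul : ∀ x y : A, σ (x * y) ≤ σ x * σ y)

include h0 hadd hsmul hmul

lemma one_add_approx (d : ℕ) (hd : 0 < d) (b : A)
    (hb : σ b ≤ ((8:ℝ) * 2 ^ (2 * d))⁻¹) : (1 + b) ∈ Approx σ d := by
  intro ε hε
  have hηpos : (0:ℝ) < ((8:ℝ) * 2 ^ (2 * d))⁻¹ := by positivity
  obtain ⟨m, hm⟩ := exists_pow_lt_of_lt_one
    (show (0:ℝ) < ε / ((8:ℝ) * 2 ^ (2 * d))⁻¹ by positivity)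
    (by norm_num : (1:ℝ) / 2 < 1)
  refine ⟨(newton (2 * d) b m) ^ (2 * d), pow_mem d _, ?_⟩
  have hest := (newton_est σ h0 hadd hsmul hmul d hd b hb m).1
  have hlt : ((8:ℝ) * 2 ^ (2 * d))⁻¹ * (1 / 2) ^ m < ε := by
    rw [← lt_div_iff₀' hηpos]
    exact hm
  linarith

lemma approx_sum {d : ℕ} {ι : Type*} (s : Finset ι) (f : ι → A)
    (hf : ∀ i ∈ s, f i ∈ Approx σ d) : (∑ i ∈ s, f i) ∈ Approx σ d := by
  classical
  induction s using Finset.cons_induction with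
  | empty => simpa using approx_of_mem σ h0 hadd hsmul (zero_mem d)
  | cons i s hi ih =>
    rw [Finset.sum_cons]
    exact approx_add σ h0 hadd hsmul (hf i (Finset.mem_cons_self i s))
      (ih fun j hj => hf j (Finset.mem_cons_of_mem hj))

include hmul in
lemma approx_pow {d : ℕ} (hd : 0 < d) {x : A} (hx : x ∈ Approx σ d) (m : ℕ) :
    x ^ m ∈ Approx σ d := by
  induction m with
  | zero => simpa using approx_of_mem σ h0 hadd hsmul (one_mem hd)
  | succ m ih =>
    rw [pow_succ]
    exact approx_mul σ h0 hadd hsmul hmul ih hx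

omit h0 hadd hsmul hmul in
/-- The Bernstein polynomial identity specialised to the quadratic `(2x-1)^2`,
evaluated at `c = (1+a)/2`. -/
lemma bern_eval (n : ℕ) (a : A) :
    ∑ ν ∈ Finset.range (n + 1),
        ((2 * (ν:ℝ) - (n:ℝ)) ^ 2) •
          (Polynomial.aeval ((2:ℝ)⁻¹ • (1 + a)) (bernsteinPolynomial ℝ n ν))
      = ((n:ℝ) * ((n:ℝ) - 1)) • (a * a) + (n:ℝ) • (1 : A) := by
  set c : A := (2:ℝ)⁻¹ • (1 + a) with hc
  set φ := Polynomial.aeval (R := ℝ) c with hφ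
  have hcast : ∀ k : ℕ, ((k * (k - 1) : ℕ) : ℝ) = (k:ℝ) * ((k:ℝ) - 1) := by
    intro k
    cases k with
    | zero => simp
    | succ j => push_cast [Nat.succ_sub_one]; ring
  have A1 : ∑ ν ∈ Finset.range (n + 1), φ (bernsteinPolynomial ℝ n ν) = 1 := by
    rw [← map_sum, bernsteinPolynomial.sum, map_one]
  have A2 : ∑ ν ∈ Finset.range (n + 1), (ν:ℝ) • φ (bernsteinPolynomial ℝ n ν)
      = (n:ℝ) • c := by
    have h := congrArg φ (bernsteinPolynomial.sum_smul ℝ n)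
    rw [map_sum] at h
    simp only [map_nsmul] at h
    simp only [← Nat.cast_smul_eq_nsmul ℝ] at h
    rw [h, Polynomial.aeval_X]
  have A3 : ∑ ν ∈ Finset.range (n + 1),
        ((ν:ℝ) * ((ν:ℝ) - 1)) • φ (bernsteinPolynomial ℝ n ν)
      = ((n:ℝ) * ((n:ℝ) - 1)) • (c * c) := by
    have h := congrArg φ (bernsteinPolynomial.sum_mul_smul ℝ n)
    rw [map_sum] at h
    simp only [map_nsmul] at h
    simp only [← Nat.cast_smul_eq_nsmul ℝ] at h
    simp only [hcast] at h
    rw [h, map_pow, Polynomial.aeval_X, sq]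
  have expand : ∀ ν ∈ Finset.range (n + 1),
      ((2 * (ν:ℝ) - (n:ℝ)) ^ 2) • φ (bernsteinPolynomial ℝ n ν)
        = (4:ℝ) • (((ν:ℝ) * ((ν:ℝ) - 1)) • φ (bernsteinPolynomial ℝ n ν))
          + ((4:ℝ) - 4 * (n:ℝ)) • ((ν:ℝ) • φ (bernsteinPolynomial ℝ n ν))
          + ((n:ℝ) ^ 2) • φ (bernsteinPolynomial ℝ n ν) := by
    intro ν _
    rw [smul_smul, smul_smul, ← add_smul, ← add_smul]
    congr 1
    ring
  rw [Finset.sum_congr rfl expand, Finset.sum_add_distrib, Finset.sum_add_distrib,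
    ← Finset.smul_sum, ← Finset.smul_sum, ← Finset.smul_sum, A1, A2, A3]
  have hcc : c * c = (4:ℝ)⁻¹ • ((1:A) + (a + a + a * a)) := by
    rw [hc, smul_mul_smul_comm]
    have h1 : (1 + a) * (1 + a) = (1:A) + (a + a + a * a) := by ring
    rw [h1]
    norm_num
  rw [hcc, hc]
  module

/-- The core positivity result: a continuous functional nonnegative on sums of
`2d`-th powers is nonnegative on squares. -/
lemma core (L : A →ₗ[ℝ] ℝ) (hLσ : ∀ x : A, |L x| ≤ σ x)
    (d : ℕ) (hd : 0 < d) (hpos : ∀ q ∈ sumPowers A d, 0 ≤ L q) (a : A) :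
    0 ≤ L (a * a) := by
  set η : ℝ := ((8:ℝ) * 2 ^ (2 * d))⁻¹ with hη
  have hηpos : 0 < η := by positivity
  have hσa1 : (0:ℝ) < σ a + 1 := by linarith [h0 a]
  set s : ℝ := η / (σ a + 1) with hs
  have hspos : 0 < s := by positivity
  set a' : A := s • a with ha'
  have hσa' : σ a' ≤ η := by
    have h1 := hsmul s a
    rw [abs_of_nonneg hspos.le] at h1
    have h2 : s * σ a ≤ η := by
      rw [hs, div_mul_eq_mul_div, div_le_iff₀ hσa1]
      nlinarith [h0 a]
    linarith
  suffices hsuff : 0 ≤ L (a' * a') by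
    have he : a' * a' = (s * s) • (a * a) := by
      rw [ha', smul_mul_smul_comm]
    rw [he, map_smul, smul_eq_mul] at hsuff
    nlinarith [mul_pos hspos hspos]
  have hσa'' : σ (-a') ≤ η := (sigma_neg σ h0 hadd hsmul a').trans hσa'
  -- the elements 1 ± a' are approximable
  have hP : (1 + a') ∈ Approx σ d := one_add_approx σ h0 hadd hsmul hmul d hd a' hσa'
  have hM : (1 - a') ∈ Approx σ d := by
    have := one_add_approx σ h0 hadd hsmul hmul d hd (-a') hσa''
    simpa [sub_eq_add_neg] using this
  set c : A := (2:ℝ)⁻¹ • (1 + a') with hc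
  have hcA : c ∈ Approx σ d := approx_smul σ h0 hadd hsmul hd (by norm_num) hP
  have h1cA : (1 : A) - c ∈ Approx σ d := by
    have he : (1 : A) - c = (2:ℝ)⁻¹ • (1 - a') := by
      rw [hc]; module
    rw [he]
    exact approx_smul σ h0 hadd hsmul hd (by norm_num) hM
  -- key inequality for every n
  have key : ∀ n : ℕ, 0 ≤ ((n:ℝ) * ((n:ℝ) - 1)) * L (a' * a') + (n:ℝ) * L 1 := by
    intro n
    have hmem : (((n:ℝ) * ((n:ℝ) - 1)) • (a' * a') + (n:ℝ) • (1:A)) ∈ Approx σ d := by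
      rw [← bern_eval n a']
      have hterm : ∀ ν ∈ Finset.range (n + 1),
          ((2 * (ν:ℝ) - (n:ℝ)) ^ 2) •
            (Polynomial.aeval ((2:ℝ)⁻¹ • (1 + a')) (bernsteinPolynomial ℝ n ν))
            ∈ Approx σ d := by
        intro ν _
        refine approx_smul σ h0 hadd hsmul hd (sq_nonneg _) ?_
        have hB : (Polynomial.aeval ((2:ℝ)⁻¹ • (1 + a')) (bernsteinPolynomial ℝ n ν))
            = ((n.choose ν : ℝ) • (1:A)) * (c ^ ν * (1 - c) ^ (n - ν)) := by
          rw [bernsteinPolynomial]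
          simp only [map_mul, map_pow, map_natCast, map_sub, map_one, Polynomial.aeval_X, ← hc]
          rw [show ((n.choose ν : A)) = (n.choose ν : ℝ) • (1:A) by
            rw [← Algebra.algebraMap_eq_smul_one, map_natCast]]
          ring
        rw [hB]
        refine approx_mul σ h0 hadd hsmul hmul ?_ ?_
        · exact approx_smul σ h0 hadd hsmul hd (by positivity)
            (approx_of_mem σ h0 hadd hsmul (one_mem hd))
        · exact approx_mul σ h0 hadd hsmul hmul
            (approx_pow σ h0 hadd hsmul hmul hd hcA ν)
            (approx_pow σ h0 hadd hsmul hmul hd h1cA (n - ν))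
      exact approx_sum σ h0 hadd hsmul hmul _ _ hterm
    have hnn := approx_nonneg σ h0 hadd hsmul L hLσ hpos hmem
    rw [map_add, map_smul, map_smul, smul_eq_mul, smul_eq_mul] at hnn
    exact hnn
  -- pass to the limit
  have h2 : ∀ n : ℕ, -(L 1) / ((n:ℝ) + 1) ≤ L (a' * a') := by
    intro n
    have hk := key (n + 2)
    push_cast at hk
    have hn1 : (0:ℝ) < (n:ℝ) + 1 := by positivity
    have hn2 : (0:ℝ) < (n:ℝ) + 2 := by positivity
    rw [div_le_iff₀ hn1]
    nlinarith
  have hlim : Filter.Tendsto (fun n : ℕ => -(L 1) / ((n:ℝ) + 1)) Filter.atTop (nhds 0) := by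
    have h := (tendsto_const_div_atTop_nhds_zero_nat (-(L 1))).comp (Filter.tendsto_add_atTop_nat 1)
    exact Filter.Tendsto.congr (fun n => by simp only [Function.comp_apply]; push_cast; ring) h
  exact le_of_tendsto' hlim h2

end SPaux

/-- **Equivalence of positivity on sums of even powers for continuous functionals.**
Let `τ` be a locally multiplicatively convex topology on `A` generated by a family of
submultiplicative seminorms and let `L : A → ℝ` be a `τ`-continuous linear functional.
Then the following are equivalent:
(1) `L(Σ A²) ⊆ [0, ∞)`;
(2) `L(Σ A^{2d}) ⊆ [0, ∞)` for all `d ∈ ℕ`, `d ≥ 1`;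
(3) `L(Σ A^{2d}) ⊆ [0, ∞)` for some `d ∈ ℕ`, `d ≥ 1`. -/
theorem positivity_even_powers_tfae (A : Type*) [CommRing A] [Algebra ℝ A]
    {ι : Type*} [Nonempty ι] (p : ι → Seminorm ℝ A)
    (hsub : ∀ i : ι, ∀ a b : A, p i (a * b) ≤ p i a * p i b)
    (L : A →ₗ[ℝ] ℝ)
    (hL : @Continuous A ℝ (seminormFamilyTopology p) inferInstance ⇑L) :
    List.TFAE
      [∀ a ∈ sumPowers A 1, 0 ≤ L a,
       ∀ d : ℕ, 0 < d → ∀ a ∈ sumPowers A d, 0 ≤ L a,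
       ∃ d : ℕ, 0 < d ∧ ∀ a ∈ sumPowers A d, 0 ≤ L a] := by
  letI : TopologicalSpace A := seminormFamilyTopology p
  have hws : WithSeminorms p := ⟨rfl⟩
  set q : Seminorm ℝ A := (normSeminorm ℝ ℝ).comp L with hq
  have hqc : Continuous ⇑q := by
    have he : ⇑q = fun x => ‖L x‖ := rfl
    rw [he]
    exact continuous_norm.comp hL
  obtain ⟨sF, C, hC0, hle⟩ := Seminorm.bound_of_continuous hws q hqc
  set M : ℝ := max (C:ℝ) 1 with hM
  have hM1 : (1:ℝ) ≤ M := le_max_right _ _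
  have hMC : (C:ℝ) ≤ M := le_max_left _ _
  set σ : A → ℝ := fun x => M * (sF.sup p) x with hσ
  have h0 : ∀ x : A, 0 ≤ σ x := fun x =>
    mul_nonneg (by linarith) (apply_nonneg _ x)
  have hadd : ∀ x y : A, σ (x + y) ≤ σ x + σ y := by
    intro x y
    have h := map_add_le_add (sF.sup p) x y
    have := mul_le_mul_of_nonneg_left h (show (0:ℝ) ≤ M by linarith)
    rw [hσ]
    dsimp only
    rw [mul_add] at this
    linarith [this]
  have hsmulσ : ∀ (r : ℝ) (x : A), σ (r • x) ≤ |r| * σ x := by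
    intro r x
    have h := map_smul_eq_mul (sF.sup p) r x
    rw [hσ]
    dsimp only
    rw [h]
    have : ‖r‖ = |r| := rfl
    rw [this]
    ring_nf
    exact le_refl _
  have hsup_mul : ∀ x y : A, (sF.sup p) (x * y) ≤ (sF.sup p) x * (sF.sup p) y := by
    intro x y
    refine Seminorm.finset_sup_apply_le
      (mul_nonneg (apply_nonneg _ x) (apply_nonneg _ y)) fun i hi => ?_
    calc p i (x * y) ≤ p i x * p i y := hsub i x y
      _ ≤ (sF.sup p) x * (sF.sup p) y :=
          mul_le_mul (Seminorm.le_finset_sup_apply hi) (Seminorm.le_finset_sup_apply hi)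
            (apply_nonneg _ y) (apply_nonneg _ x)
  have hmulσ : ∀ x y : A, σ (x * y) ≤ σ x * σ y := by
    intro x y
    rw [hσ]
    dsimp only
    have h1 := hsup_mul x y
    have h2 : (0:ℝ) ≤ (sF.sup p) x := apply_nonneg _ x
    have h3 : (0:ℝ) ≤ (sF.sup p) y := apply_nonneg _ y
    have hM0 : (0:ℝ) ≤ M := le_trans zero_le_one hM1
    calc M * (sF.sup p) (x * y) ≤ M * ((sF.sup p) x * (sF.sup p) y) :=
          mul_le_mul_of_nonneg_left h1 hM0
      _ ≤ M * (sF.sup p) x * (M * (sF.sup p) y) := by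
          nlinarith [mul_nonneg (mul_nonneg (sub_nonneg.mpr hM1) hM0) (mul_nonneg h2 h3)]
  have hLσ : ∀ x : A, |L x| ≤ σ x := by
    intro x
    have h1 : q x ≤ (C • sF.sup p) x := hle x
    have h2 : q x = ‖L x‖ := rfl
    have h3 : (C • sF.sup p) x = (C:ℝ) * (sF.sup p) x := rfl
    rw [h2, h3] at h1
    rw [hσ]
    dsimp only
    have h4 : (0:ℝ) ≤ (sF.sup p) x := apply_nonneg _ x
    calc |L x| = ‖L x‖ := rfl
      _ ≤ (C:ℝ) * (sF.sup p) x := h1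
      _ ≤ M * (sF.sup p) x := mul_le_mul_of_nonneg_right hMC h4
  tfae_have 1 → 2 := by
    intro h1 d hd a ha
    exact h1 a (SPaux.subset_one ha)
  tfae_have 2 → 3 := by
    intro h2
    exact ⟨1, one_pos, h2 1 one_pos⟩
  tfae_have 3 → 1 := by
    rintro ⟨d, hd, hpos⟩ x hx
    induction hx using AddSubmonoid.closure_induction with
    | mem z hz =>
      obtain ⟨a, rfl⟩ := hz
      have hcore := SPaux.core σ h0 hadd hsmulσ hmulσ L hLσ d hd hpos a
      rw [show (fun a : A => a ^ (2 * 1)) a = a * a from by ring]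
      exact hcore
    | zero => simp
    | add u v _ _ ihu ihv =>
      rw [map_add]
      exact add_nonneg ihu ihv
  tfae_finish
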